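/- Let H be a complex Hilbert space and let μ₊, μ₋ be densely defined operators with μ₊* = -μ₋ + iλ₋ and μ₋* = -μ₊ - iλ₊ (where λ_± denote bounded multiplication operators with λ₊ = conj(λ₋)), satisfying the commutation relation [μ₊,μ₋]u = (i/2)K_E V u - iλ₋μ₊u - iλ₊μ₋u on a domain where Vu = iku. Then for any such u, ‖μ₊u‖² = ‖μ₋u‖² - (k/2)⟨K_E u, u⟩. -/

import Mathlib

/-- Guillemin–Kazhdan-type energy identity (Proposition 3.2), abstract operator form: if
`μ₊* = -μ₋ + iλ₋`, `μ₋* = -μ₊ - iλ₊` with `λ₊ = conj(λ₋)` (as multiplication operators,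
`λ₊ = λ₋*`), and `[μ₊,μ₋]u = (i/2)K_E Vu - iλ₋μ₊u - iλ₊μ₋u`, then for `u` in the `k`-th
vertical Fourier mode (`Vu = iku`) one has `‖μ₊u‖² = ‖μ₋u‖² - (k/2)⟨K_E u, u⟩`. -/
theorem stmt_17 {H : Type*} [NormedAddCommGroup H] [InnerProductSpace ℂ H] [CompleteSpace H]
    (μp μm KE V lm lp : H →L[ℂ] H)
    (hconj : ContinuousLinearMap.adjoint lm = lp)
    (hadj1 : ContinuousLinearMap.adjoint μp = -μm + Complex.I • lm)
    (hadj2 : ContinuousLinearMap.adjoint μm = -μp - Complex.I • lp)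
    (hcomm : ∀ w : H, μp (μm w) - μm (μp w)
      = (Complex.I / 2) • KE (V w) - Complex.I • lm (μp w) - Complex.I • lp (μm w))
    (u : H) (k : ℤ) (hu : V u = (k : ℂ) • Complex.I • u) :
    (‖μp u‖ ^ 2 : ℂ) = (‖μm u‖ ^ 2 : ℂ) - ((k : ℂ) / 2) * inner ℂ (KE u) u := by
  set c : ℂ := inner ℂ u (KE u) with hc
  have h1 : (inner ℂ (μp u) (μp u) : ℂ) = inner ℂ u (-(μm (μp u)) + Complex.I • lm (μp u)) := by
    rw [← ContinuousLinearMap.adjoint_inner_right, hadj1]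
    simp [inner_add_right, inner_sub_right, inner_neg_right, inner_smul_right]
  have h2 : (inner ℂ (μm u) (μm u) : ℂ) = inner ℂ u (-(μp (μm u)) - Complex.I • lp (μm u)) := by
    rw [← ContinuousLinearMap.adjoint_inner_right, hadj2]
    simp [inner_add_right, inner_sub_right, inner_neg_right, inner_smul_right]
  have hcom := hcomm u
  rw [hu, map_smul, map_smul] at hcom
  have hsc : (Complex.I / 2) • ((k:ℂ) • Complex.I • KE u) = (-(k:ℂ)/2) • KE u := by
    rw [smul_smul, smul_smul]
    congr 1
    have : Complex.I * Complex.I = -1 := Complex.I_mul_I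
    ring_nf
    rw [Complex.I_sq]
    ring
  rw [hsc] at hcom
  have hw : (-(μm (μp u)) + Complex.I • lm (μp u)) - (-(μp (μm u)) - Complex.I • lp (μm u))
      = (-(k:ℂ)/2) • KE u := by
    have hrearr : -μm (μp u) + Complex.I • lm (μp u) - (-μp (μm u) - Complex.I • lp (μm u))
        = (μp (μm u) - μm (μp u)) + Complex.I • lm (μp u) + Complex.I • lp (μm u) := by module
    rw [hrearr, hcom]; module
  have hdiff : (inner ℂ (μp u) (μp u) : ℂ) - inner ℂ (μm u) (μm u) = (-(k:ℂ)/2) * c := by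
    rw [h1, h2, ← inner_sub_right, hw, inner_smul_right, hc]
  have hnp : (inner ℂ (μp u) (μp u) : ℂ) = (‖μp u‖ : ℂ)^2 := inner_self_eq_norm_sq_to_K _
  have hnm : (inner ℂ (μm u) (μm u) : ℂ) = (‖μm u‖ : ℂ)^2 := inner_self_eq_norm_sq_to_K _
  have h3 : (‖μp u‖ : ℂ)^2 - (‖μm u‖ : ℂ)^2 = (-(k:ℂ)/2) * c := by
    rw [← hnp, ← hnm]; exact hdiff
  have h4 : (starRingEnd ℂ) ((-(k:ℂ)/2) * c) = (-(k:ℂ)/2) * c := by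
    rw [← h3]
    simp [map_sub, map_pow, Complex.conj_ofReal]
  have h4' : (-(k:ℂ)/2) * (starRingEnd ℂ) c = (-(k:ℂ)/2) * c := by
    rw [map_mul] at h4
    have hk : (starRingEnd ℂ) (-(k:ℂ)/2) = -(k:ℂ)/2 := by
      simp [map_div₀, map_neg, map_intCast, map_ofNat]
    rwa [hk] at h4
  have h5 : (inner ℂ (KE u) u : ℂ) = (starRingEnd ℂ) c := by
    rw [hc, inner_conj_symm]
  rw [h5]
  linear_combination h3 - h4'
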